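/- Let p be an odd prime, q a positive power of p, and j a natural number with 2j ≤ q−1. Let r be an integer such that j!·((q−1)−2j)!·r = (q−2−j)!. Then in ℤ/pℤ one has (−1)^j·(q−1)·r = C_j, where C_j is the j-th Catalan number. -/

import Mathlib

open Nat Finset


lemma base_case (p : ℕ) [Fact p.Prime] (c k : ℕ) (h : c + k ≤ p - 1) :
    ((Nat.choose (p - 1 - c) k : ZMod p)) = (-1) ^ k * (Nat.choose (c + k) k : ZMod p) := by
  have hp := Fact.out (p := p.Prime)
  have hp2 : 2 ≤ p := hp.two_le
  have hfac : ((k ! : ℕ) : ZMod p) ≠ 0 := by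
    rw [Ne, ZMod.natCast_eq_zero_iff]
    intro hdvd
    exact absurd (hp.dvd_factorial.mp hdvd) (by omega)
  apply mul_left_cancel₀ hfac
  have e1 : (k ! : ZMod p) * (Nat.choose (p - 1 - c) k : ZMod p)
      = ((Nat.descFactorial (p - 1 - c) k : ℕ) : ZMod p) := by
    rw [Nat.descFactorial_eq_factorial_mul_choose]; push_cast; ring
  have e2 : (k ! : ZMod p) * ((-1) ^ k * (Nat.choose (c + k) k : ZMod p))
      = (-1) ^ k * ((Nat.descFactorial (c + k) k : ℕ) : ZMod p) := by
    rw [Nat.descFactorial_eq_factorial_mul_choose]; push_cast; ring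
  rw [e1, e2]
  -- RHS descFactorial as product of (1 + c + i)
  have hd : Nat.descFactorial (c + k) k = ∏ i ∈ range k, (1 + c + i) := by
    rw [Nat.descFactorial_eq_prod_range,
      ← Finset.prod_range_reflect (fun i => 1 + c + i) k]
    exact Finset.prod_congr rfl fun i hi => by
      simp only [Finset.mem_range] at hi; omega
  rw [Nat.descFactorial_eq_prod_range, hd]
  push_cast
  have hterm : ∀ i ∈ range k, ((p - 1 - c - i : ℕ) : ZMod p) = (-1) * (1 + (c : ZMod p) + (i : ZMod p)) := by
    intro i hi
    simp only [Finset.mem_range] at hi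
    have hsum : (p - 1 - c - i) + (1 + c + i) = p := by omega
    have hz : ((p - 1 - c - i : ℕ) : ZMod p) + ((1 + c + i : ℕ) : ZMod p) = 0 := by
      rw [← Nat.cast_add, hsum, ZMod.natCast_self]
    have := eq_neg_of_add_eq_zero_left hz
    rw [this]; push_cast; ring
  rw [Finset.prod_congr rfl hterm, Finset.prod_mul_distrib, Finset.prod_const, Finset.card_range]

lemma gen_case (p : ℕ) [Fact p.Prime] (hodd : Odd p) :
    ∀ e : ℕ, 1 ≤ e → ∀ c k : ℕ, c + k ≤ p ^ e - 1 →
      ((Nat.choose (p ^ e - 1 - c) k : ZMod p)) = (-1) ^ k * (Nat.choose (c + k) k : ZMod p) := by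
  intro e
  induction e with
  | zero => intro h; omega
  | succ f ih =>
    intro _ c k h
    rcases Nat.eq_zero_or_pos f with hf | hf
    · subst hf; simpa using base_case p c k (by simpa using h)
    have hp := Fact.out (p := p.Prime)
    have hp0 : 0 < p := hp.pos
    have hp2 : 2 ≤ p := hp.two_le
    have hpf : 0 < p ^ f := Nat.pow_pos hp0
    have hppow : p ^ (f + 1) = p * p ^ f := by rw [pow_succ]; ring
    have hcdm : p * (c / p) + c % p = c := Nat.div_add_mod c p
    have hkdm : p * (k / p) + k % p = k := Nat.div_add_mod k p
    have hcm : c % p < p := Nat.mod_lt _ hp0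
    have hkm : k % p < p := Nat.mod_lt _ hp0
    have hpow1 : 0 < p ^ (f+1) := Nat.pow_pos hp0
    have hcd : c / p < p ^ f := by
      rw [Nat.div_lt_iff_lt_mul hp0]
      calc c ≤ p ^ (f+1) - 1 := by omega
        _ < p ^ f * p := by rw [← pow_succ]; omega
    have hsum_div : c / p + k / p < p ^ f := by
      by_contra hcon; push_neg at hcon
      have h2 : p * p ^ f ≤ p * (c / p + k / p) := Nat.mul_le_mul_left p hcon
      rw [Nat.mul_add] at h2
      omega
    have key : p ^ (f+1) - 1 - c = p * (p ^ f - 1 - c / p) + (p - 1 - c % p) := by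
      have e1 : p * (p ^ f - 1 - c / p) + p * (c / p) + p = p * p ^ f := by
        have e0 : (p ^ f - 1 - c / p) + (c / p) + 1 = p ^ f := by omega
        calc p * (p ^ f - 1 - c / p) + p * (c / p) + p
            = p * ((p ^ f - 1 - c / p) + c / p + 1) := by ring
          _ = p * p ^ f := by rw [e0]
      omega
    have hmod : (p ^ (f+1) - 1 - c) % p = p - 1 - c % p := by
      rw [key, Nat.mul_add_mod, Nat.mod_eq_of_lt (show p - 1 - c % p < p by omega)]
    have hdiv : (p ^ (f+1) - 1 - c) / p = p ^ f - 1 - c / p := by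
      rw [key, Nat.mul_add_div hp0, Nat.div_eq_of_lt (show p - 1 - c % p < p by omega), Nat.add_zero]
    have lucasL : ((Nat.choose (p ^ (f+1) - 1 - c) k : ZMod p))
        = (Nat.choose (p - 1 - c % p) (k % p) : ZMod p)
          * (Nat.choose (p ^ f - 1 - c / p) (k / p) : ZMod p) := by
      have hl := (ZMod.natCast_eq_natCast_iff _ _ _).mpr
        (Choose.choose_modEq_choose_mod_mul_choose_div_nat
          (p := p) (n := p ^ (f+1) - 1 - c) (k := k))
      rw [hl, hmod, hdiv]; push_cast; ring
    have hsign : ((-1 : ZMod p)) ^ k = (-1) ^ (k % p) * (-1) ^ (k / p) := by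
      conv_lhs => rw [← hkdm]
      rw [pow_add, pow_mul, hodd.neg_one_pow]
      ring
    by_cases hcarry : c % p + k % p ≤ p - 1
    · have hckeq : c + k = p * (c / p + k / p) + (c % p + k % p) := by
        rw [Nat.mul_add]; omega
      have hckm : (c + k) % p = c % p + k % p := by
        conv_lhs => rw [hckeq]
        rw [Nat.mul_add_mod, Nat.mod_eq_of_lt (show c % p + k % p < p by omega)]
      have hckd : (c + k) / p = c / p + k / p := by
        conv_lhs => rw [hckeq]
        rw [Nat.mul_add_div hp0, Nat.div_eq_of_lt (show c % p + k % p < p by omega), Nat.add_zero]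
      have lucasR : ((Nat.choose (c + k) k : ZMod p))
          = (Nat.choose (c % p + k % p) (k % p) : ZMod p)
            * (Nat.choose (c / p + k / p) (k / p) : ZMod p) := by
        have hl := (ZMod.natCast_eq_natCast_iff _ _ _).mpr
          (Choose.choose_modEq_choose_mod_mul_choose_div_nat
            (p := p) (n := c + k) (k := k))
        rw [hl, hckm, hckd]; push_cast; ring
      rw [lucasL, lucasR, base_case p (c % p) (k % p) (by omega),
        ih hf (c / p) (k / p) (by omega), hsign]
      ring
    · push_neg at hcarry
      have hz1 : Nat.choose (p - 1 - c % p) (k % p) = 0 :=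
        Nat.choose_eq_zero_of_lt (by omega)
      have hckeq : c + k = p * (c / p + k / p + 1) + (c % p + k % p - p) := by
        rw [Nat.mul_add, Nat.mul_add, Nat.mul_one]; omega
      have hckm : (c + k) % p = c % p + k % p - p := by
        conv_lhs => rw [hckeq]
        rw [Nat.mul_add_mod, Nat.mod_eq_of_lt (show c % p + k % p - p < p by omega)]
      have hz2 : Nat.choose ((c + k) % p) (k % p) = 0 := by
        rw [hckm]; exact Nat.choose_eq_zero_of_lt (by omega)
      have lucasR : ((Nat.choose (c + k) k : ZMod p))
          = (Nat.choose ((c + k) % p) (k % p) : ZMod p)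
            * (Nat.choose ((c + k) / p) (k / p) : ZMod p) := by
        have hl := (ZMod.natCast_eq_natCast_iff _ _ _).mpr
          (Choose.choose_modEq_choose_mod_mul_choose_div_nat
            (p := p) (n := c + k) (k := k))
        rw [hl]; push_cast; ring
      rw [lucasL, lucasR, hz1, hz2]
      push_cast; ring

/-- if `j!·((q−1)−2j)!·r = (q−2−j)!` in `ℤ`, then in `ℤ/pℤ`
`(−1)^j·(q−1)·r` equals the `j`-th Catalan number. -/
theorem statement_19
    (p : ℕ) (hp : p.Prime) (hodd : Odd p)
    (e : ℕ) (he : 1 ≤ e) (q : ℕ) (hq : q = p ^ e)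
    (j : ℕ) (hj : 2 * j ≤ q - 1)
    (r : ℤ)
    (hr : (Nat.factorial j : ℤ) * (Nat.factorial (q - 1 - 2 * j) : ℤ) * r
            = (Nat.factorial (q - 2 - j) : ℤ)) :
    (((-1 : ℤ) ^ j * ((q : ℤ) - 1) * r : ℤ) : ZMod p) = (catalan j : ZMod p) := by
  haveI : Fact p.Prime := ⟨hp⟩
  have hp2 : 2 ≤ p := hp.two_le
  have hp3 : 3 ≤ p := by rcases hodd with ⟨m, hm⟩; omega
  have hqp : p ≤ q := by
    rw [hq]
    calc p = p ^ 1 := (pow_one p).symm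
      _ ≤ p ^ e := Nat.pow_le_pow_right (by omega) he
  have hq3 : 3 ≤ q := le_trans hp3 hqp
  rcases Nat.eq_zero_or_pos j with hj0 | hj1
  · exfalso
    subst hj0
    simp only [Nat.factorial_zero, Nat.cast_one, one_mul, Nat.mul_zero, Nat.sub_zero] at hr
    have hfac : (q - 1)! = (q - 1) * (q - 2)! := by
      rw [show q - 1 = (q - 2) + 1 by omega, Nat.factorial_succ]
    have hne : ((q - 2)! : ℤ) ≠ 0 := Int.natCast_ne_zero.mpr (Nat.factorial_ne_zero _)
    have h1 : ((q - 1 : ℕ) : ℤ) * r = 1 := by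
      apply mul_left_cancel₀ hne
      rw [hfac] at hr
      push_cast at hr ⊢
      linear_combination hr
    have h2 := Int.eq_one_of_mul_eq_one_right (by positivity) h1
    have h3 : (q - 1 : ℕ) = 1 := by exact_mod_cast h2
    omega
  · have F1 : Nat.choose (q-1-j) j * j ! * (q-1-2*j)! = (q-1-j)! := by
      have := Nat.choose_mul_factorial_mul_factorial (show j ≤ q-1-j by omega)
      rwa [show q-1-j-j = q-1-2*j by omega] at this
    have F2 : Nat.choose (q-2-j) (j-1) * (j-1)! * (q-1-2*j)! = (q-2-j)! := by
      have := Nat.choose_mul_factorial_mul_factorial (show j-1 ≤ q-2-j by omega)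
      rwa [show q-2-j-(j-1) = q-1-2*j by omega] at this
    have F3 : (q-1-j)! = (q-1-j) * (q-2-j)! := by
      rw [show q-1-j = (q-2-j)+1 by omega, Nat.factorial_succ]
    have zF1 : (Nat.choose (q-1-j) j : ℤ) * (j ! : ℤ) * ((q-1-2*j)! : ℤ) = ((q-1-j)! : ℤ) := by
      exact_mod_cast F1
    have zF2 : (Nat.choose (q-2-j) (j-1) : ℤ) * ((j-1)! : ℤ) * ((q-1-2*j)! : ℤ) = ((q-2-j)! : ℤ) := by
      exact_mod_cast F2
    have zF3 : ((q-1-j)! : ℤ) = ((q:ℤ) - 1 - (j:ℤ)) * ((q-2-j)! : ℤ) := by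
      have hc : ((q - 1 - j : ℕ) : ℤ) = (q:ℤ) - 1 - (j:ℤ) := by omega
      rw [F3, Nat.cast_mul, hc]
    have zF4 : (j : ℤ) * ((j-1)! : ℤ) = (j ! : ℤ) := by
      exact_mod_cast Nat.mul_factorial_pred hj1.ne'
    have hne : ((j ! : ℤ) * ((q-1-2*j)! : ℤ)) ≠ 0 := by positivity
    have key : ((q:ℤ) - 1) * r
        = (Nat.choose (q-1-j) j : ℤ) + (Nat.choose (q-2-j) (j-1) : ℤ) := by
      apply mul_left_cancel₀ hne
      linear_combination ((q:ℤ) - 1) * hr - zF1 - zF3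
        + (((q-1-2*j)! : ℤ) * (Nat.choose (q-2-j) (j-1) : ℤ)) * zF4 - (j:ℤ) * zF2
    have lhs_eq : ((-1 : ℤ)) ^ j * ((q:ℤ) - 1) * r
        = (-1) ^ j * ((Nat.choose (q-1-j) j : ℤ) + (Nat.choose (q-2-j) (j-1) : ℤ)) := by
      rw [mul_assoc, key]
    rw [lhs_eq]
    push_cast
    have G1 : (Nat.choose (q-1-j) j : ZMod p) = (-1) ^ j * (Nat.choose (j+j) j : ZMod p) := by
      have hG := gen_case p hodd e he j j (by rw [← hq]; omega)
      rwa [← hq] at hG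
    have G2 : (Nat.choose (q-2-j) (j-1) : ZMod p)
        = (-1) ^ (j-1) * (Nat.choose ((j+1)+(j-1)) (j-1) : ZMod p) := by
      have hG := gen_case p hodd e he (j+1) (j-1) (by rw [← hq]; omega)
      rwa [← hq, show q - 1 - (j+1) = q-2-j by omega] at hG
    rw [G1, G2, show (j+1)+(j-1) = 2*j by omega, show j + j = 2*j by omega]
    have hcat : Nat.choose (2*j) j = catalan j + Nat.choose (2*j) (j-1) := by
      have h1 := succ_mul_catalan_eq_centralBinom j
      rw [Nat.centralBinom_eq_two_mul_choose] at h1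
      have h2 := Nat.choose_succ_right_eq (2*j) (j-1)
      rw [show j - 1 + 1 = j by omega, show 2*j - (j-1) = j+1 by omega] at h2
      apply Nat.eq_of_mul_eq_mul_left (show 0 < j + 1 by omega)
      zify at h1 h2 ⊢
      linear_combination (-1 : ℤ) * h1 + h2
    rw [hcat]
    push_cast
    have s1 : ((-1 : ZMod p)) ^ j * (-1) ^ j = 1 := by
      rw [← pow_add]; exact Even.neg_one_pow ⟨j, rfl⟩
    have s2 : ((-1 : ZMod p)) ^ j * (-1) ^ (j-1) = -1 := by
      rw [← pow_add]; exact Odd.neg_one_pow ⟨j-1, by omega⟩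
    linear_combination ((catalan j : ZMod p) + (Nat.choose (2*j) (j-1) : ZMod p)) * s1
      + ((Nat.choose (2*j) (j-1) : ZMod p)) * s2
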